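/- Assume the x_{m,p} are nonnegative integers such that for every m there is some p with x_{m,p} ≥ 1, assume b_p, n_p > 0 for p ∈ {1,…,P}, and assume the family k ↦ ∏_{p=1}^P (1 + b_p·K_p(k))^(−n_p) is summable over k ∈ ℕ^M. Then each count K(x,r,+) and K(x,r,−) is finite, the family r ↦ (K(x,r,+) − K(x,r,−)) · ∏_{p=1}^P (1 + b_p·(Y_p + r_p))^(−n_p) is absolutely summable over r ∈ ℕ^P, and ∫_{(0,∞)^P} [∏_{m=1}^M e^(−y_m·(X_m·β)) / (1 + e^(−(X_m·β)))] · ∏_{p=1}^P G(β_p; b_p, n_p) dβ = Σ_{r ∈ ℕ^P} (K(x,r,+) − K(x,r,−)) · ∏_{p=1}^P (1 + b_p·(Y_p + r_p))^(−n_p). -/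

import Mathlib

open MeasureTheory

/-- The Gamma density with scale `b` and shape `n`:
`G(z; b, n) = (1/(b·Γ(n)))·(z/b)^(n−1)·e^(−z/b)` for `z > 0`, and `0` for `z ≤ 0`. -/
noncomputable def gammaDensity (b n z : ℝ) : ℝ :=
  if 0 < z then 1 / (b * Real.Gamma n) * (z / b) ^ (n - 1) * Real.exp (-(z / b)) else 0

/-- `K_p(k) = Σ_m (y_m + k_m)·x_{m,p}` (with integer-valued covariates `x`). -/
noncomputable def Kcoef {M P : ℕ} (x : Fin M → Fin P → ℕ) (y : Fin M → ℝ)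
    (k : Fin M → ℕ) (p : Fin P) : ℝ :=
  ∑ m, (y m + k m) * x m p

/-- The set of `k ∈ ℕ^M` with `Σ_m k_m·x_{m,p} = r_p` for all `p`, and `|k|` even. -/
def solPlus {M P : ℕ} (x : Fin M → Fin P → ℕ) (r : Fin P → ℕ) : Set (Fin M → ℕ) :=
  {k | (∀ p, ∑ m, k m * x m p = r p) ∧ Even (∑ m, k m)}

/-- The set of `k ∈ ℕ^M` with `Σ_m k_m·x_{m,p} = r_p` for all `p`, and `|k|` odd. -/
def solMinus {M P : ℕ} (x : Fin M → Fin P → ℕ) (r : Fin P → ℕ) : Set (Fin M → ℕ) :=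
  {k | (∀ p, ∑ m, k m * x m p = r p) ∧ Odd (∑ m, k m)}

/-- `K(x,r,+)`, the number of `k ∈ ℕ^M` with `Σ_m k_m·x_{m,p} = r_p` for all `p`
and `|k|` even. -/
noncomputable def Kplus {M P : ℕ} (x : Fin M → Fin P → ℕ) (r : Fin P → ℕ) : ℕ :=
  Nat.card (solPlus x r)

/-- `K(x,r,−)`, the number of `k ∈ ℕ^M` with `Σ_m k_m·x_{m,p} = r_p` for all `p`
and `|k|` odd. -/
noncomputable def Kminus {M P : ℕ} (x : Fin M → Fin P → ℕ) (r : Fin P → ℕ) : ℕ :=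
  Nat.card (solMinus x r)

lemma gammaDensity_nonneg {b n : ℝ} (hb : 0 < b) (hn : 0 < n) (z : ℝ) :
    0 ≤ gammaDensity b n z := by
  rw [gammaDensity]
  split_ifs with h
  · have := Real.Gamma_pos_of_pos hn
    positivity
  · exact le_rfl

lemma measurable_gammaDensity (b n : ℝ) : Measurable (gammaDensity b n) := by
  unfold gammaDensity
  apply Measurable.ite measurableSet_Ioi _ measurable_const
  fun_prop

lemma exp_mul_gammaDensity_eq {b n c : ℝ} (hb : 0 < b) (z : ℝ) (hz : 0 < z) :
    Real.exp (-(c * z)) * gammaDensity b n z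
      = (1 / (b * Real.Gamma n) / b ^ (n - 1)) * (z ^ (n - 1) * Real.exp (-((c + 1 / b) * z))) := by
  rw [gammaDensity, if_pos hz, Real.div_rpow hz.le hb.le]
  have h : -((c + 1 / b) * z) = -(c * z) + -(z / b) := by ring
  rw [h, Real.exp_add]
  ring

lemma exp_mul_gammaDensity_zero {b n : ℝ} (c : ℝ) (z : ℝ) (hz : ¬ 0 < z) :
    Real.exp (-(c * z)) * gammaDensity b n z = 0 := by
  rw [gammaDensity, if_neg hz, mul_zero]

lemma integrable_exp_mul_gammaDensity {b n c : ℝ} (hb : 0 < b) (hn : 0 < n) (hc : 0 ≤ c) :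
    Integrable (fun z => Real.exp (-(c * z)) * gammaDensity b n z) := by
  have hr : 0 < c + 1 / b := by positivity
  have h1 : IntegrableOn (fun z => Real.exp (-(c * z)) * gammaDensity b n z) (Set.Ioi 0) := by
    apply IntegrableOn.congr_fun (f := fun z =>
      (1 / (b * Real.Gamma n) / b ^ (n - 1)) * (z ^ (n - 1) * Real.exp (-((c + 1 / b) * z))))
    · apply Integrable.const_mul
      have base := integrableOn_rpow_mul_exp_neg_mul_rpow (p := 1) (s := n - 1) (b := c + 1 / b)
        (by linarith) zero_lt_one hr
      refine base.congr_fun (fun z hz => ?_) measurableSet_Ioi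
      simp only [Real.rpow_one]
      ring_nf
    · intro z hz
      exact (exp_mul_gammaDensity_eq hb z hz).symm
    · exact measurableSet_Ioi
  rw [← integrable_indicator_iff (measurableSet_Ioi (a := (0:ℝ)))] at h1
  refine h1.congr (Filter.Eventually.of_forall fun z => ?_)
  by_cases hz : z ∈ Set.Ioi (0:ℝ)
  · rw [Set.indicator_of_mem hz]
  · rw [Set.indicator_of_notMem hz]
    exact (exp_mul_gammaDensity_zero c z hz).symm

lemma integral_exp_mul_gammaDensity {b n c : ℝ} (hb : 0 < b) (hn : 0 < n) (hc : 0 ≤ c) :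
    ∫ z, Real.exp (-(c * z)) * gammaDensity b n z = (1 + b * c) ^ (-n) := by
  have hr : 0 < c + 1 / b := by positivity
  have hΓ : 0 < Real.Gamma n := Real.Gamma_pos_of_pos hn
  rw [← setIntegral_eq_integral_of_forall_compl_eq_zero
    (fun z hz => exp_mul_gammaDensity_zero c z hz) (s := Set.Ioi 0)]
  rw [setIntegral_congr_fun measurableSet_Ioi (fun z hz => exp_mul_gammaDensity_eq hb z hz)]
  rw [integral_const_mul, Real.integral_rpow_mul_exp_neg_mul_Ioi hn hr]
  have h1 : (1:ℝ) + b * c = b * (c + 1 / b) := by field_simp; ring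
  rw [h1, Real.mul_rpow hb.le hr.le, Real.rpow_neg hb.le, Real.rpow_neg hr.le,
    one_div (c + 1/b), Real.inv_rpow hr.le, Real.rpow_sub hb, Real.rpow_one]
  have hbn : 0 < b ^ n := Real.rpow_pos_of_pos hb n
  have hrn : 0 < (c + 1/b) ^ n := Real.rpow_pos_of_pos hr n
  field_simp


lemma summable_abs_sign_exp {t yv : ℝ} (ht : 0 < t) :
    Summable (fun j : ℕ => |(-1:ℝ) ^ j * Real.exp (-((yv + j) * t))|) := by
  have hq : Real.exp (-t) < 1 := by
    rw [Real.exp_lt_one_iff]; linarith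
  have h := (summable_geometric_of_lt_one (le_of_lt (Real.exp_pos (-t))) hq).mul_left
    (Real.exp (-(yv * t)))
  refine h.congr fun j => ?_
  rw [abs_mul, abs_pow, abs_neg, abs_one, one_pow, one_mul,
    Real.abs_exp, ← Real.exp_nat_mul, ← Real.exp_add]
  congr 1
  ring

lemma hasSum_sign_exp {t : ℝ} (yv : ℝ) (ht : 0 < t) :
    HasSum (fun j : ℕ => (-1:ℝ) ^ j * Real.exp (-((yv + j) * t)))
      (Real.exp (-(yv * t)) / (1 + Real.exp (-t))) := by
  have hq : ‖-Real.exp (-t)‖ < 1 := by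
    rw [norm_neg, Real.norm_eq_abs, Real.abs_exp, Real.exp_lt_one_iff]; linarith
  have h := (hasSum_geometric_of_norm_lt_one hq).mul_left (Real.exp (-(yv * t)))
  have he : ∀ j : ℕ, Real.exp (-(yv * t)) * (-Real.exp (-t)) ^ j
      = (-1:ℝ) ^ j * Real.exp (-((yv + j) * t)) := by
    intro j
    rw [show (-((yv + (j:ℝ)) * t)) = -(yv * t) + (j:ℝ) * -t from by ring,
      Real.exp_add, neg_pow, ← Real.exp_nat_mul]
    ring
  have hv : Real.exp (-(yv * t)) * (1 - -Real.exp (-t))⁻¹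
      = Real.exp (-(yv * t)) / (1 + Real.exp (-t)) := by
    rw [sub_neg_eq_add, div_eq_mul_inv]
  rw [← hv]
  have := funext he
  rw [this] at h
  exact h

lemma pi_prod_hasSum : ∀ (N : ℕ) (g : Fin N → ℕ → ℝ), (∀ i, Summable fun j => |g i j|) →
    (Summable fun k : Fin N → ℕ => |∏ i, g i (k i)|) ∧
    HasSum (fun k : Fin N → ℕ => ∏ i, g i (k i)) (∏ i, ∑' j, g i j) := by
  intro N
  induction N with
  | zero =>
    intro g hg
    constructor
    · exact Summable.of_finite
    · simpa using hasSum_fintype (fun _ : Fin 0 → ℕ => (1:ℝ))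
  | succ N ih =>
    intro g hg
    obtain ⟨ihS, ihH⟩ := ih (fun i => g i.succ) (fun i => hg i.succ)
    let e : ℕ × (Fin N → ℕ) ≃ (Fin (N+1) → ℕ) := Fin.consEquiv (fun _ : Fin (N+1) => ℕ)
    have key : ∀ p : ℕ × (Fin N → ℕ),
        (∏ i, g i (e p i)) = g 0 p.1 * ∏ i, g i.succ (p.2 i) := by
      intro p
      rw [Fin.prod_univ_succ]
      simp [e]
    have hprod : Summable fun q : ℕ × (Fin N → ℕ) => |g 0 q.1| * |∏ i, g i.succ (q.2 i)| := by
      apply Summable.mul_of_nonneg (hg 0) ihS (fun j => abs_nonneg _) (fun k => abs_nonneg _)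
    have hSumAbs : Summable fun k : Fin (N+1) → ℕ => |∏ i, g i (k i)| := by
      rw [← e.summable_iff]
      refine hprod.congr fun q => ?_
      simp only [Function.comp_apply]
      rw [key q, abs_mul]
    refine ⟨hSumAbs, ?_⟩
    rw [← e.hasSum_iff]
    have hnorm0 : Summable fun j => ‖g 0 j‖ := by simpa only [Real.norm_eq_abs] using hg 0
    have hnormG : Summable fun k : Fin N → ℕ => ‖∏ i, g i.succ (k i)‖ := by
      simpa only [Real.norm_eq_abs] using ihS
    have hmul := (summable_mul_of_summable_norm hnorm0 hnormG).hasSum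
    rw [← tsum_mul_tsum_of_summable_norm hnorm0 hnormG] at hmul
    have hfun : ((fun k : Fin (N+1) → ℕ => ∏ i, g i (k i)) ∘ e)
        = fun q : ℕ × (Fin N → ℕ) => g 0 q.1 * ∏ i, g i.succ (q.2 i) := by
      funext q; exact key q
    rw [hfun, Fin.prod_univ_succ, ← ihH.tsum_eq]
    exact hmul

lemma tsum_subtype_finite {α} {s : Set α} (hs : s.Finite) (f : α → ℝ) :
    ∑' (a : s), f a = ∑ a ∈ hs.toFinset, f a := by
  rw [tsum_subtype]
  rw [tsum_eq_sum (s := hs.toFinset)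
    (by intro b hb; exact Set.indicator_of_notMem (by simpa using hb) f)]
  exact Finset.sum_congr rfl fun a ha => Set.indicator_of_mem (hs.mem_toFinset.mp ha) f

section
variable {M P : ℕ} (x : Fin M → Fin P → ℕ)

/-- the fiber set of the Diophantine map -/
def fibSet (r : Fin P → ℕ) : Set (Fin M → ℕ) := {k | ∀ p, ∑ m, k m * x m p = r p}

lemma fibSet_eq_preimage (r : Fin P → ℕ) :
    (fun (k : Fin M → ℕ) (p : Fin P) => ∑ m, k m * x m p) ⁻¹' {r} = fibSet x r := by
  ext k
  simp [fibSet, funext_iff]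

lemma fibSet_finite (hx : ∀ m, ∃ p, 1 ≤ x m p) (r : Fin P → ℕ) : (fibSet x r).Finite := by
  have hpi : (Set.univ.pi fun _ : Fin M => (Set.Iic (∑ p, r p))).Finite :=
    Set.Finite.pi (fun _ => Set.finite_Iic _)
  apply hpi.subset
  intro k hk
  intro m _
  obtain ⟨p, hp⟩ := hx m
  have h1 : k m ≤ k m * x m p := Nat.le_mul_of_pos_right _ hp
  have h2 : k m * x m p ≤ ∑ m', k m' * x m' p :=
    Finset.single_le_sum (f := fun m' => k m' * x m' p) (fun m' _ => Nat.zero_le _) (Finset.mem_univ m)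
  have h3 : (∑ m', k m' * x m' p) = r p := hk p
  have h4 : r p ≤ ∑ p', r p' :=
    Finset.single_le_sum (f := fun p' => r p') (fun p' _ => Nat.zero_le _) (Finset.mem_univ p)
  simp only [Set.mem_Iic]
  omega

lemma solPlus_subset (r : Fin P → ℕ) : solPlus x r ⊆ fibSet x r := fun k hk => hk.1
lemma solMinus_subset (r : Fin P → ℕ) : solMinus x r ⊆ fibSet x r := fun k hk => hk.1

lemma Kplus_eq (r : Fin P → ℕ) (hfin : (fibSet x r).Finite) :
    (Kplus x r : ℝ) = ((hfin.toFinset.filter fun k => Even (∑ m, k m)).card : ℝ) := by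
  congr 1
  rw [Kplus, Nat.card_coe_set_eq]
  congr 1
  have : solPlus x r = ↑(hfin.toFinset.filter fun k => Even (∑ m, k m)) := by
    ext k
    simp only [Finset.coe_filter, Set.mem_setOf_eq, Set.Finite.mem_toFinset]
    constructor
    · exact fun hk => ⟨hk.1, hk.2⟩
    · exact fun hk => ⟨hk.1, hk.2⟩
  rw [this, Set.ncard_coe_finset]

lemma Kminus_eq (r : Fin P → ℕ) (hfin : (fibSet x r).Finite) :
    (Kminus x r : ℝ) = ((hfin.toFinset.filter fun k => ¬ Even (∑ m, k m)).card : ℝ) := by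
  congr 1
  rw [Kminus, Nat.card_coe_set_eq]
  congr 1
  have : solMinus x r = ↑(hfin.toFinset.filter fun k => ¬ Even (∑ m, k m)) := by
    ext k
    simp only [Finset.coe_filter, Set.mem_setOf_eq, Set.Finite.mem_toFinset]
    constructor
    · exact fun hk => ⟨hk.1, Nat.not_even_iff_odd.symm.mp hk.2⟩
    · exact fun hk => ⟨hk.1, Nat.not_even_iff_odd.symm.mpr hk.2⟩
  rw [this, Set.ncard_coe_finset]

lemma fib_sign_sum (r : Fin P → ℕ) (hfin : (fibSet x r).Finite) :
    ∑ k ∈ hfin.toFinset, (-1:ℝ) ^ (∑ m, k m) = (Kplus x r : ℝ) - (Kminus x r : ℝ) := by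
  classical
  rw [← Finset.sum_filter_add_sum_filter_not hfin.toFinset (fun k => Even (∑ m, k m))]
  rw [Kplus_eq x r hfin, Kminus_eq x r hfin]
  rw [Finset.sum_congr rfl (fun k hk => Even.neg_one_pow (Finset.mem_filter.mp hk).2),
    Finset.sum_congr rfl (fun k hk =>
      Odd.neg_one_pow (Nat.not_even_iff_odd.symm.mpr (Finset.mem_filter.mp hk).2))]
  simp [Finset.sum_const]
  ring

lemma fib_card_sum (r : Fin P → ℕ) (hfin : (fibSet x r).Finite) :
    (Kplus x r : ℝ) + (Kminus x r : ℝ) = (hfin.toFinset.card : ℝ) := by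
  classical
  rw [Kplus_eq x r hfin, Kminus_eq x r hfin, ← Nat.cast_add,
    Finset.card_filter_add_card_filter_not]

end

section
variable {M P : ℕ}

lemma regroup_main (x : Fin M → Fin P → ℕ) (hx : ∀ m, ∃ p, 1 ≤ x m p)
    (C : (Fin P → ℕ) → ℝ) (hC : ∀ r, 0 ≤ C r)
    (hsum : Summable fun k : Fin M → ℕ => C (fun p => ∑ m, k m * x m p)) :
    Summable (fun r : Fin P → ℕ => |((Kplus x r : ℝ) - (Kminus x r : ℝ)) * C r|) ∧
    HasSum (fun r : Fin P → ℕ => ((Kplus x r : ℝ) - (Kminus x r : ℝ)) * C r)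
      (∑' k : Fin M → ℕ, (-1:ℝ) ^ (∑ m, k m) * C (fun p => ∑ m, k m * x m p)) := by
  classical
  set pr : (Fin M → ℕ) → (Fin P → ℕ) := fun k p => ∑ m, k m * x m p with hpr
  have hfin : ∀ r, (fibSet x r).Finite := fibSet_finite x hx
  have hfib : ∀ r, pr ⁻¹' {r} = fibSet x r := fibSet_eq_preimage x
  -- the signed family is summable
  have hg : Summable (fun k : Fin M → ℕ => (-1:ℝ) ^ (∑ m, k m) * C (pr k)) := by
    apply Summable.of_abs
    refine hsum.congr fun k => ?_
    rw [abs_mul, abs_pow, abs_neg, abs_one, one_pow, one_mul, abs_of_nonneg (hC _)]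
  -- fiberwise regrouping of the signed sum
  have hfw := hg.hasSum.tsum_fiberwise pr
  -- fiberwise regrouping of the unsigned sum
  have hfwa := hsum.hasSum.tsum_fiberwise pr
  -- compute the fiber sums
  have hfibsum : ∀ r : Fin P → ℕ,
      (∑' k : (pr ⁻¹' {r} : Set (Fin M → ℕ)), (-1:ℝ) ^ (∑ m, (k : Fin M → ℕ) m) * C (pr k))
        = ((Kplus x r : ℝ) - (Kminus x r : ℝ)) * C r := by
    intro r
    have h1 : ∀ k : (pr ⁻¹' {r} : Set (Fin M → ℕ)), C (pr (k : Fin M → ℕ)) = C r := by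
      rintro ⟨k, hk⟩
      simp only [Set.mem_preimage, Set.mem_singleton_iff] at hk
      rw [hk]
    have h2 : (∑' k : (pr ⁻¹' {r} : Set (Fin M → ℕ)),
        (-1:ℝ) ^ (∑ m, (k : Fin M → ℕ) m) * C (pr (k : Fin M → ℕ)))
        = ∑' k : (pr ⁻¹' {r} : Set (Fin M → ℕ)), (-1:ℝ) ^ (∑ m, (k : Fin M → ℕ) m) * C r := by
      exact tsum_congr fun k => by rw [h1 k]
    rw [h2, tsum_mul_right]
    have h3 : (pr ⁻¹' {r} : Set (Fin M → ℕ)).Finite := (hfib r) ▸ hfin r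
    have h4 : ∑' k : (pr ⁻¹' {r} : Set (Fin M → ℕ)), (-1:ℝ) ^ (∑ m, (k : Fin M → ℕ) m)
        = ∑ k ∈ h3.toFinset, (-1:ℝ) ^ (∑ m, k m) :=
      tsum_subtype_finite h3 (fun k => (-1:ℝ) ^ (∑ m, k m))
    rw [h4]
    have h5 : h3.toFinset = (hfin r).toFinset := by
      apply Finset.coe_injective
      rw [Set.Finite.coe_toFinset, Set.Finite.coe_toFinset, hfib r]
    rw [h5, fib_sign_sum x r (hfin r)]
  have hmain : HasSum (fun r : Fin P → ℕ => ((Kplus x r : ℝ) - (Kminus x r : ℝ)) * C r)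
      (∑' k : Fin M → ℕ, (-1:ℝ) ^ (∑ m, k m) * C (pr k)) := by
    exact (funext hfibsum) ▸ hfw
  refine ⟨?_, hmain⟩
  -- unsigned fiber sums
  have hfibsum' : ∀ r : Fin P → ℕ,
      (∑' k : (pr ⁻¹' {r} : Set (Fin M → ℕ)), C (pr (k : Fin M → ℕ)))
        = ((Kplus x r : ℝ) + (Kminus x r : ℝ)) * C r := by
    intro r
    have h3 : (pr ⁻¹' {r} : Set (Fin M → ℕ)).Finite := (hfib r) ▸ hfin r
    have h2 : (∑' k : (pr ⁻¹' {r} : Set (Fin M → ℕ)), C (pr (k : Fin M → ℕ)))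
        = ∑' _k : (pr ⁻¹' {r} : Set (Fin M → ℕ)), C r := by
      refine tsum_congr fun k => ?_
      obtain ⟨k, hk⟩ := k
      simp only [Set.mem_preimage, Set.mem_singleton_iff] at hk
      rw [hk]
    rw [h2, tsum_subtype_finite h3 (fun _ => C r), Finset.sum_const, nsmul_eq_mul]
    have h5 : h3.toFinset = (hfin r).toFinset := by
      apply Finset.coe_injective
      rw [Set.Finite.coe_toFinset, Set.Finite.coe_toFinset, hfib r]
    rw [h5, ← fib_card_sum x r (hfin r)]
  have hS : Summable (fun r : Fin P → ℕ => ((Kplus x r : ℝ) + (Kminus x r : ℝ)) * C r) := by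
    refine Summable.congr hfwa.summable ?_
    exact hfibsum'
  refine Summable.of_nonneg_of_le (fun r => abs_nonneg _) (fun r => ?_) hS
  rw [abs_mul, abs_of_nonneg (hC r)]
  apply mul_le_mul_of_nonneg_right _ (hC r)
  calc |(Kplus x r : ℝ) - (Kminus x r : ℝ)| ≤ |(Kplus x r : ℝ)| + |(Kminus x r : ℝ)| :=
        abs_sub _ _
    _ = (Kplus x r : ℝ) + (Kminus x r : ℝ) := by
        rw [abs_of_nonneg (Nat.cast_nonneg _), abs_of_nonneg (Nat.cast_nonneg _)]
end

section
variable {M P : ℕ}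

lemma Kcoef_nonneg (x : Fin M → Fin P → ℕ) {y : Fin M → ℝ} (hy : ∀ m, 0 ≤ y m)
    (k : Fin M → ℕ) (p : Fin P) : 0 ≤ Kcoef x y k p := by
  apply Finset.sum_nonneg
  intro m _
  have := hy m
  positivity

lemma integral_main (x : Fin M → Fin P → ℕ) (hx : ∀ m, ∃ p, 1 ≤ x m p)
    (y : Fin M → ℝ) (hy : ∀ m, 0 ≤ y m)
    (b n : Fin P → ℝ) (hb : ∀ p, 0 < b p) (hn : ∀ p, 0 < n p)
    (hsum : Summable fun k : Fin M → ℕ => ∏ p, (1 + b p * Kcoef x y k p) ^ (-(n p))) :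
    ∫ β in Set.univ.pi (fun _ : Fin P => Set.Ioi (0 : ℝ)),
        (∏ m, Real.exp (-(y m * ∑ p, (x m p : ℝ) * β p)) /
            (1 + Real.exp (-(∑ p, (x m p : ℝ) * β p)))) *
          ∏ p, gammaDensity (b p) (n p) (β p)
      = ∑' k : Fin M → ℕ,
          (-1:ℝ) ^ (∑ m, k m) * ∏ p, (1 + b p * Kcoef x y k p) ^ (-(n p)) := by
  classical
  set S : Set (Fin P → ℝ) := Set.univ.pi (fun _ : Fin P => Set.Ioi (0 : ℝ)) with hS
  set f : (Fin M → ℕ) → (Fin P → ℝ) → ℝ := fun k β =>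
    (-1:ℝ) ^ (∑ m, k m) *
      ∏ p, (Real.exp (-(Kcoef x y k p * β p)) * gammaDensity (b p) (n p) (β p)) with hf
  have hKnn : ∀ k p, 0 ≤ Kcoef x y k p := fun k p => Kcoef_nonneg x hy k p
  -- step 2 : vanishing off S
  have hvanish : ∀ β ∉ S, ∀ k, f k β = 0 := by
    intro β hβ k
    rw [hS, Set.mem_pi] at hβ
    push_neg at hβ
    obtain ⟨p, _, hp⟩ := hβ
    simp only [hf]
    have : Real.exp (-(Kcoef x y k p * β p)) * gammaDensity (b p) (n p) (β p) = 0 :=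
      exp_mul_gammaDensity_zero _ _ hp
    rw [Finset.prod_eq_zero (Finset.mem_univ p) this, mul_zero]
  -- step 1 : pointwise expansion on S
  have hpt : ∀ β ∈ S, (∏ m, Real.exp (-(y m * ∑ p, (x m p : ℝ) * β p)) /
            (1 + Real.exp (-(∑ p, (x m p : ℝ) * β p)))) *
          ∏ p, gammaDensity (b p) (n p) (β p) = ∑' k, f k β := by
    intro β hβ
    rw [hS, Set.mem_pi] at hβ
    have hβp : ∀ p, 0 < β p := fun p => hβ p (Set.mem_univ p)
    set t : Fin M → ℝ := fun m => ∑ p, (x m p : ℝ) * β p with hts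
    have ht : ∀ m, 0 < t m := by
      intro m
      obtain ⟨p, hp⟩ := hx m
      apply Finset.sum_pos' (fun q _ => mul_nonneg (Nat.cast_nonneg _) (hβp q).le)
      refine ⟨p, Finset.mem_univ p, ?_⟩
      have h1 : (0:ℝ) < x m p := by exact_mod_cast hp
      exact mul_pos h1 (hβp p)
    set g : Fin M → ℕ → ℝ := fun m j => (-1:ℝ) ^ j * Real.exp (-((y m + j) * t m)) with hg
    have hgabs : ∀ m, Summable fun j => |g m j| := fun m => summable_abs_sign_exp (ht m)
    have hH := (pi_prod_hasSum M g hgabs).2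
    have htsum : ∀ m, ∑' j, g m j = Real.exp (-(y m * t m)) / (1 + Real.exp (-(t m))) :=
      fun m => (hasSum_sign_exp (y m) (ht m)).tsum_eq
    -- rewrite the limit of hH
    rw [show (∏ m, ∑' j, g m j)
        = ∏ m, Real.exp (-(y m * t m)) / (1 + Real.exp (-(t m)))
        from Finset.prod_congr rfl fun m _ => htsum m] at hH
    -- rewrite the terms
    have hterm : ∀ k : Fin M → ℕ,
        (∏ m, g m (k m)) * ∏ p, gammaDensity (b p) (n p) (β p) = f k β := by
      intro k
      have h1 : (∏ m, g m (k m))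
          = (-1:ℝ) ^ (∑ m, k m) * Real.exp (-(∑ m, (y m + k m) * t m)) := by
        rw [hg]
        simp only []
        rw [Finset.prod_mul_distrib, Finset.prod_pow_eq_pow_sum]
        congr 1
        rw [← Real.exp_sum]
        congr 1
        rw [← Finset.sum_neg_distrib]
      have h2 : (∑ m, (y m + k m) * t m) = ∑ p, Kcoef x y k p * β p := by
        rw [hts]
        simp only [Kcoef, Finset.mul_sum, Finset.sum_mul]
        rw [Finset.sum_comm]
        exact Finset.sum_congr rfl fun p _ => Finset.sum_congr rfl fun m _ => by ring
      rw [h1, h2, hf]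
      simp only []
      rw [mul_assoc]
      congr 1
      rw [show (-(∑ p, Kcoef x y k p * β p)) = ∑ p, -(Kcoef x y k p * β p) from
        (Finset.sum_neg_distrib _).symm, Real.exp_sum, ← Finset.prod_mul_distrib]
    have hH2 := hH.mul_right (∏ p, gammaDensity (b p) (n p) (β p))
    rw [show (fun k : Fin M → ℕ => (∏ m, g m (k m)) * ∏ p, gammaDensity (b p) (n p) (β p))
      = fun k => f k β from funext hterm] at hH2
    exact hH2.tsum_eq.symm
  -- measurability
  have hmeas : ∀ k, AEStronglyMeasurable (f k) (volume : Measure (Fin P → ℝ)) := by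
    intro k
    apply Measurable.aestronglyMeasurable
    apply Measurable.const_mul
    apply Finset.measurable_prod
    intro p _
    apply Measurable.mul
    · exact (Real.measurable_exp.comp (((measurable_pi_apply p).const_mul _).neg))
    · exact (measurable_gammaDensity (b p) (n p)).comp (measurable_pi_apply p)
  -- integrability and the value of each integral
  have hint : ∀ k, Integrable (fun β : Fin P → ℝ =>
      ∏ p, (Real.exp (-(Kcoef x y k p * β p)) * gammaDensity (b p) (n p) (β p))) := by
    intro k
    exact MeasureTheory.Integrable.fintype_prod (𝕜 := ℝ)
      (f := fun p z => Real.exp (-(Kcoef x y k p * z)) * gammaDensity (b p) (n p) z)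
      (fun p => integrable_exp_mul_gammaDensity (hb p) (hn p) (hKnn k p))
  have hintf : ∀ k, Integrable (f k) := by
    intro k
    simp only [hf]
    exact (hint k).const_mul _
  have hval : ∀ k, ∫ β : Fin P → ℝ,
      (∏ p, (Real.exp (-(Kcoef x y k p * β p)) * gammaDensity (b p) (n p) (β p)))
      = ∏ p, (1 + b p * Kcoef x y k p) ^ (-(n p)) := by
    intro k
    rw [MeasureTheory.volume_pi, MeasureTheory.integral_fintype_prod_eq_prod (𝕜 := ℝ)
      (f := fun p z => Real.exp (-(Kcoef x y k p * z)) * gammaDensity (b p) (n p) z)]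
    exact Finset.prod_congr rfl fun p _ =>
      integral_exp_mul_gammaDensity (hb p) (hn p) (hKnn k p)
  have hvalf : ∀ k, ∫ β : Fin P → ℝ, f k β
      = (-1:ℝ) ^ (∑ m, k m) * ∏ p, (1 + b p * Kcoef x y k p) ^ (-(n p)) := by
    intro k
    simp only [hf]
    rw [MeasureTheory.integral_const_mul, hval k]
  -- the terms are nonnegative in absolute value with known integral
  have hprodnn : ∀ k (β : Fin P → ℝ), 0 ≤
      ∏ p, (Real.exp (-(Kcoef x y k p * β p)) * gammaDensity (b p) (n p) (β p)) :=
    fun k β => Finset.prod_nonneg fun p _ =>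
      mul_nonneg (Real.exp_nonneg _) (gammaDensity_nonneg (hb p) (hn p) _)
  have habs : ∀ k, ∫ β : Fin P → ℝ, ‖f k β‖
      = ∏ p, (1 + b p * Kcoef x y k p) ^ (-(n p)) := by
    intro k
    rw [← hval k]
    congr 1
    funext β
    simp only [hf]
    rw [Real.norm_eq_abs, abs_mul, abs_pow, abs_neg, abs_one, one_pow, one_mul,
      abs_of_nonneg (hprodnn k β)]
  -- finiteness of the sum of lintegrals
  have hC0 : ∀ k : Fin M → ℕ, 0 ≤ ∏ p, (1 + b p * Kcoef x y k p) ^ (-(n p)) := by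
    intro k
    apply Finset.prod_nonneg
    intro p _
    have h1 : (0:ℝ) < 1 + b p * Kcoef x y k p := by
      have := hKnn k p
      have := hb p
      positivity
    positivity
  have hlint : ∑' k : Fin M → ℕ, ∫⁻ β : Fin P → ℝ, ‖f k β‖₊ ≠ ⊤ := by
    have heq : ∀ k : Fin M → ℕ, ∫⁻ β : Fin P → ℝ, ‖f k β‖₊
        = ENNReal.ofReal (∏ p, (1 + b p * Kcoef x y k p) ^ (-(n p))) := by
      intro k
      rw [show (∫⁻ β : Fin P → ℝ, (‖f k β‖₊ : ENNReal)) = ∫⁻ β, ‖f k β‖ₑ from rfl,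
        ← MeasureTheory.ofReal_integral_norm_eq_lintegral_enorm (hintf k), habs k]
    rw [tsum_congr heq, ← ENNReal.ofReal_tsum_of_nonneg hC0 hsum]
    exact ENNReal.ofReal_ne_top
  -- assemble
  have hSmeas : MeasurableSet S := MeasurableSet.univ_pi fun _ => measurableSet_Ioi
  rw [MeasureTheory.setIntegral_congr_fun hSmeas hpt]
  rw [MeasureTheory.setIntegral_eq_integral_of_forall_compl_eq_zero (fun β hβ => by
    rw [show (fun k => f k β) = fun _ => (0:ℝ) from funext fun k => hvanish β hβ k, tsum_zero])]
  rw [MeasureTheory.integral_tsum hmeas hlint]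
  exact tsum_congr hvalf
end


/-- Regrouped closed-form series expansion of the marginalized logit likelihood against
a product of independent Gamma priors (Theorem 2 of the paper, for one household). -/
theorem integral_logit_gamma_eq_tsum_diophantine (M P : ℕ) (hM : 1 ≤ M) (hP : 1 ≤ P)
    (x : Fin M → Fin P → ℕ) (hx : ∀ m, ∃ p, 1 ≤ x m p)
    (y : Fin M → ℝ) (hy : ∀ m, y m = 0 ∨ y m = 1)
    (b n : Fin P → ℝ) (hb : ∀ p, 0 < b p) (hn : ∀ p, 0 < n p)
    (hsum : Summable fun k : Fin M → ℕ => ∏ p, (1 + b p * Kcoef x y k p) ^ (-(n p))) :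
    (∀ r : Fin P → ℕ, (solPlus x r).Finite ∧ (solMinus x r).Finite) ∧
    Summable (fun r : Fin P → ℕ =>
      |((Kplus x r : ℝ) - (Kminus x r : ℝ)) *
        ∏ p, (1 + b p * ((∑ m, y m * x m p) + r p)) ^ (-(n p))|) ∧
    ∫ β in Set.univ.pi (fun _ : Fin P => Set.Ioi (0 : ℝ)),
        (∏ m, Real.exp (-(y m * ∑ p, (x m p : ℝ) * β p)) /
            (1 + Real.exp (-(∑ p, (x m p : ℝ) * β p)))) *
          ∏ p, gammaDensity (b p) (n p) (β p)
      = ∑' r : Fin P → ℕ,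
          ((Kplus x r : ℝ) - (Kminus x r : ℝ)) *
            ∏ p, (1 + b p * ((∑ m, y m * x m p) + r p)) ^ (-(n p)) := by
  have hy0 : ∀ m, 0 ≤ y m := by
    intro m
    rcases hy m with h | h <;> rw [h] <;> norm_num
  have hKc : ∀ (k : Fin M → ℕ) (p : Fin P),
      Kcoef x y k p = (∑ m, y m * x m p) + (((∑ m, k m * x m p : ℕ)) : ℝ) := by
    intro k p
    rw [Kcoef]
    push_cast
    rw [← Finset.sum_add_distrib]
    exact Finset.sum_congr rfl fun m _ => by ring
  have hC : ∀ r : Fin P → ℕ,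
      0 ≤ ∏ p, (1 + b p * ((∑ m, y m * x m p) + (r p : ℝ))) ^ (-(n p)) := by
    intro r
    apply Finset.prod_nonneg
    intro p _
    have hY : 0 ≤ ∑ m, y m * x m p :=
      Finset.sum_nonneg fun m _ => mul_nonneg (hy0 m) (Nat.cast_nonneg _)
    have hr : (0:ℝ) ≤ (r p : ℝ) := Nat.cast_nonneg _
    have hbp := hb p
    positivity
  have hsum' : Summable fun k : Fin M → ℕ =>
      (fun r : Fin P → ℕ => ∏ p, (1 + b p * ((∑ m, y m * x m p) + (r p : ℝ))) ^ (-(n p)))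
        (fun p => ∑ m, k m * x m p) := by
    refine hsum.congr fun k => ?_
    exact Finset.prod_congr rfl fun p _ => by rw [hKc k p]
  have regroup := regroup_main x hx
    (fun r : Fin P → ℕ => ∏ p, (1 + b p * ((∑ m, y m * x m p) + (r p : ℝ))) ^ (-(n p)))
    hC hsum'
  have hfinpair : ∀ r : Fin P → ℕ, (solPlus x r).Finite ∧ (solMinus x r).Finite := fun r =>
    ⟨(fibSet_finite x hx r).subset (solPlus_subset x r),
     (fibSet_finite x hx r).subset (solMinus_subset x r)⟩
  refine ⟨hfinpair, regroup.1, ?_⟩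
  rw [integral_main x hx y hy0 b n hb hn hsum]
  rw [show (∑' k : Fin M → ℕ,
        (-1:ℝ) ^ (∑ m, k m) * ∏ p, (1 + b p * Kcoef x y k p) ^ (-(n p)))
      = ∑' k : Fin M → ℕ, (-1:ℝ) ^ (∑ m, k m) *
          (fun r : Fin P → ℕ => ∏ p, (1 + b p * ((∑ m, y m * x m p) + (r p : ℝ))) ^ (-(n p)))
            (fun p => ∑ m, k m * x m p) from
    tsum_congr fun k => by
      congr 1
      exact Finset.prod_congr rfl fun p _ => by rw [hKc k p]]
  exact regroup.2.tsum_eq.symm
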